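/- Let M ≥ 1 and N ≥ 1 be integers, α > 2/M, a_{j,k} := j + ik for (j,k) ∈ ℤ_N² := {(j,k) ∈ ℤ² : |j| ≥ N, |k| ≥ N}, and 0 < b_{j,k} ≤ |a_{j,k}|^{-α} with ∑_{(j,k) ∈ ℤ_N²} |a_{j,k}|^{-αM} ≤ 2^{-(M+1)}. Let f(z) = ∑_{(j,k) ∈ ℤ_N²} (b_{j,k}/(z − a_{j,k}))^M. Then for every (j,k) ∈ ℤ_N² and every z ∈ D(a_{j,k}, b_{j,k}) ∖ {a_{j,k}} one has |f'(z)| ≥ M((√2·N)^α − 1) > 0; in particular f has no critical points in the disks D(a_{j,k}, b_{j,k}). -/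

import Mathlib

open Filter Topology Set Metric
open scoped ENNReal

noncomputable section

namespace Paper

/-- Riemann sphere as one-point compactification of ℂ. -/
local notation "ℂ∞" => OnePoint ℂ

open Classical in
/-- The self-map of the Riemann sphere induced by `f : ℂ → ℂ` with pole set `P`:
poles and `∞` are sent to `∞`. -/
def sphereMap (f : ℂ → ℂ) (P : Set ℂ) : ℂ∞ → ℂ∞ :=
  fun z => Option.elim' OnePoint.infty
    (fun w => if w ∈ P then OnePoint.infty else ((f w : ℂ) : ℂ∞)) z

/-- The "norm" on the Riemann sphere, valued in `ℝ≥0∞`, with `∞ ↦ ⊤`. -/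
def sphNorm : ℂ∞ → ℝ≥0∞ :=
  fun z => Option.elim' ⊤ (fun w : ℂ => (‖w‖₊ : ℝ≥0∞)) z

/-- The escaping set `I(f)` of the sphere map `F`. -/
def escapingSet (F : ℂ∞ → ℂ∞) : Set ℂ :=
  {z : ℂ | Tendsto (fun n : ℕ => F^[n] (z : ℂ∞)) atTop (𝓝 (OnePoint.infty))}

/-- The set `I_R(f) = {z : liminf |F^n(z)| ≥ R}`. -/
def escapingSetGe (F : ℂ∞ → ℂ∞) (R : ℝ) : Set ℂ :=
  {z : ℂ | ENNReal.ofReal R ≤ Filter.liminf (fun n : ℕ => sphNorm (F^[n] (z : ℂ∞))) atTop}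

/-- The finite critical values of `f`. -/
def critValues (f : ℂ → ℂ) : Set ℂ :=
  {w : ℂ | ∃ c : ℂ, AnalyticAt ℂ f c ∧ deriv f c = 0 ∧ f c = w}

/-- Asymptotic values (on the sphere) of the sphere map `F`. -/
def asymValues (F : ℂ∞ → ℂ∞) : Set ℂ∞ :=
  {w : ℂ∞ | ∃ γ : ℝ → ℂ, Continuous γ ∧ Tendsto (fun t => ‖γ t‖) atTop atTop ∧
    Tendsto (fun t => F ((γ t : ℂ) : ℂ∞)) atTop (𝓝 w)}

/-- The singular set `S(f)`: finite critical values and finite asymptotic values. -/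
def singularSet (f : ℂ → ℂ) (P : Set ℂ) : Set ℂ :=
  critValues f ∪ {w : ℂ | ((w : ℂ) : ℂ∞) ∈ asymValues (sphereMap f P)}

/-- `f` is of class `B`: bounded singular set. -/
def ClassB (f : ℂ → ℂ) (P : Set ℂ) : Prop :=
  Bornology.IsBounded (singularSet f P)

/-- `∞` is not an asymptotic value of `f`. -/
def InftyNotAsym (f : ℂ → ℂ) (P : Set ℂ) : Prop :=
  OnePoint.infty ∉ asymValues (sphereMap f P)

/-- `f` is a meromorphic function on `ℂ` whose poles are exactly the (injectively enumerated)
points `a j`, the pole `a j` having order `m j ≥ 1` and coefficient `b j ≠ 0`,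
i.e. `(z - a j) ^ (m j) * f z → (b j) ^ (m j)` as `z → a j`.  Since there are infinitely many
poles, any such `f` is transcendental. -/
structure MeroData (f : ℂ → ℂ) (a : ℕ → ℂ) (m : ℕ → ℕ) (b : ℕ → ℂ) : Prop where
  inj : Function.Injective a
  analyticOff : ∀ z ∉ Set.range a, AnalyticAt ℂ f z
  mpos : ∀ j, 1 ≤ m j
  bne : ∀ j, b j ≠ 0
  blim : ∀ j, Tendsto (fun z : ℂ => (z - a j) ^ (m j) * f z) (𝓝[≠] (a j)) (𝓝 ((b j) ^ (m j)))

/-- The critical exponent of the series `∑_j (c j) ^ t`: the infimum of the set of `t ≥ 0`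
for which the series converges (`∞` if this set is empty). -/
def critExp {ι : Type*} (c : ι → ℝ) : ℝ≥0∞ :=
  sInf (ENNReal.ofReal '' {t : ℝ | 0 ≤ t ∧ Summable (fun j : ι => c j ^ t)})

/-- The component `U_j(R)` of `f⁻¹({|w| > R})` containing the pole `p`. -/
def poleComponent (f : ℂ → ℂ) (P : Set ℂ) (R : ℝ) (p : ℂ) : Set ℂ :=
  connectedComponentIn {z : ℂ | ENNReal.ofReal R < sphNorm (sphereMap f P (z : ℂ∞))} p

/-- Points of the escaping set whose orbit eventually stays in `U ⊆ ℂ`. -/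
def escapesThrough (f : ℂ → ℂ) (P : Set ℂ) (U : Set ℂ) : Set ℂ :=
  {z ∈ escapingSet (sphereMap f P) |
    ∃ N : ℕ, 1 ≤ N ∧ ∀ n ≥ N, ∃ w ∈ U, (sphereMap f P)^[n] (z : ℂ∞) = ((w : ℂ) : ℂ∞)}

end Paper

namespace Paper

/-- Index set `ℤ_N² = {(j,k) : |j|,|k| ≥ N}`. -/
def ZN (N : ℕ) : Type := {p : ℤ × ℤ // N ≤ p.1.natAbs ∧ N ≤ p.2.natAbs}

/-- The lattice point `a_{j,k} = j + i k`. -/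
def latA {N : ℕ} (p : ZN N) : ℂ := (p.1.1 : ℂ) + (p.1.2 : ℂ) * Complex.I

/-- The set of poles `{a_{j,k}}`. -/
def latPoles (N : ℕ) : Set ℂ := Set.range (latA (N := N))

/-- The function `f(z) = ∑_{(j,k) ∈ ℤ_N²} (b_{j,k}/(z - a_{j,k}))^M`. -/
def latF (N M : ℕ) (bc : ZN N → ℝ) (z : ℂ) : ℂ :=
  ∑' p : ZN N, ((bc p : ℂ) / (z - latA p)) ^ M

end Paper

namespace Paper

lemma latA_eq {N : ℕ} (p : ZN N) :
    latA p = ((p.1.1 : ℝ) : ℂ) + ((p.1.2 : ℝ) : ℂ) * Complex.I := by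
  unfold latA; push_cast; ring

lemma norm_latA_ge {N : ℕ} (p : ZN N) : Real.sqrt 2 * N ≤ ‖latA p‖ := by
  obtain ⟨⟨j, k⟩, hj, hk⟩ := p
  have hj' : N ≤ j.natAbs := hj
  have hk' : N ≤ k.natAbs := hk
  have hnorm : ‖latA ⟨(j,k), hj, hk⟩‖ = Real.sqrt ((j:ℝ)^2 + (k:ℝ)^2) := by
    exact (congrArg norm (latA_eq _)).trans (Complex.norm_add_mul_I _ _)
  have hj2 : ((N:ℝ))^2 ≤ (j:ℝ)^2 := by
    have h1 : (N:ℝ) ≤ |(j:ℝ)| := by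
      rw [← Int.cast_abs]; exact_mod_cast (by simp only [Int.abs_eq_natAbs]; exact_mod_cast hj' : (N:ℤ) ≤ |j|)
    calc ((N:ℝ))^2 ≤ |(j:ℝ)|^2 := pow_le_pow_left₀ (by positivity) h1 2
      _ = (j:ℝ)^2 := sq_abs _
  have hk2 : ((N:ℝ))^2 ≤ (k:ℝ)^2 := by
    have h1 : (N:ℝ) ≤ |(k:ℝ)| := by
      rw [← Int.cast_abs]; exact_mod_cast (by simp only [Int.abs_eq_natAbs]; exact_mod_cast hk' : (N:ℤ) ≤ |k|)
    calc ((N:ℝ))^2 ≤ |(k:ℝ)|^2 := pow_le_pow_left₀ (by positivity) h1 2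
      _ = (k:ℝ)^2 := sq_abs _
  rw [hnorm]
  have : Real.sqrt 2 * N = Real.sqrt (2 * (N:ℝ)^2) := by
    rw [Real.sqrt_mul (by norm_num), Real.sqrt_sq (by positivity)]
  rw [this]
  exact Real.sqrt_le_sqrt (by nlinarith)

lemma one_le_norm_latA_sub {N : ℕ} {p q : ZN N} (h : p ≠ q) :
    1 ≤ ‖latA p - latA q‖ := by
  obtain ⟨⟨j1, k1⟩, h1⟩ := p
  obtain ⟨⟨j2, k2⟩, h2⟩ := q
  have hsub : latA (⟨(j1,k1), h1⟩ : ZN N) - latA ⟨(j2,k2), h2⟩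
      = (((j1 - j2 : ℤ) : ℝ) : ℂ) + (((k1 - k2 : ℤ) : ℝ) : ℂ) * Complex.I := by
    unfold latA; push_cast; ring
  have hne : j1 - j2 ≠ 0 ∨ k1 - k2 ≠ 0 := by
    by_contra hc
    push_neg at hc
    exact h (Subtype.ext (by simp only [Prod.mk.injEq]; omega))
  have hint : (1:ℤ) ≤ (j1 - j2)^2 + (k1 - k2)^2 := by
    rcases hne with hne | hne
    · nlinarith [sq_nonneg (k1 - k2), sq_pos_of_ne_zero hne]
    · nlinarith [sq_nonneg (j1 - j2), sq_pos_of_ne_zero hne]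
  have hreal : (1:ℝ) ≤ ((j1 - j2 : ℤ):ℝ)^2 + ((k1 - k2 : ℤ):ℝ)^2 := by exact_mod_cast hint
  rw [hsub, Complex.norm_add_mul_I]
  calc (1:ℝ) = Real.sqrt 1 := by simp
    _ ≤ _ := Real.sqrt_le_sqrt hreal

/-- **Claim 7.2**: on each punctured disk `D(a_{j,k}, b_{j,k}) ∖ {a_{j,k}}` one has
`|f'(z)| ≥ M((√2·N)^α − 1) > 0`; in particular `f` has no critical points in these disks. -/
theorem lattice_derivative_lower_bound (M N : ℕ) (hM : 1 ≤ M) (hN : 1 ≤ N) (α : ℝ)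
    (hα : 2 / (M : ℝ) < α)
    (bc : ZN N → ℝ)
    (hbc : ∀ p : ZN N, 0 < bc p ∧ bc p ≤ ‖latA p‖ ^ (-α))
    (hsum : Summable (fun p : ZN N => ‖latA p‖ ^ (-(α * M))))
    (hbound : (∑' p : ZN N, ‖latA p‖ ^ (-(α * M))) ≤ 1 / 2 ^ (M + 1)) :
    0 < (M : ℝ) * ((Real.sqrt 2 * N) ^ α - 1)
      ∧ ∀ p : ZN N, ∀ z ∈ Metric.ball (latA p) (bc p) \ {latA p},
          (M : ℝ) * ((Real.sqrt 2 * N) ^ α - 1) ≤ ‖deriv (latF N M bc) z‖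
          ∧ deriv (latF N M bc) z ≠ 0 := by
  classical
  have hMR : (0:ℝ) < M := by exact_mod_cast hM
  have hα0 : (0:ℝ) < α := lt_trans (by positivity) hα
  have hNR : (1:ℝ) ≤ N := by exact_mod_cast hN
  have hsqrt2 : 1 < Real.sqrt 2 := by
    have h1 : (1:ℝ) = Real.sqrt 1 := by simp
    rw [h1]; exact Real.sqrt_lt_sqrt (by norm_num) (by norm_num)
  have hbase : 1 < Real.sqrt 2 * N := by nlinarith [Real.sqrt_nonneg 2]
  have hpow1 : 1 < (Real.sqrt 2 * N) ^ α :=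
    (Real.one_lt_rpow_iff_of_pos (by positivity)).mpr (Or.inl ⟨hbase, hα0⟩)
  have hC : 0 < (M:ℝ) * ((Real.sqrt 2 * N) ^ α - 1) := mul_pos hMR (by linarith)
  refine ⟨hC, ?_⟩
  have hbpos : ∀ q : ZN N, 0 < bc q := fun q => (hbc q).1
  have hbM : ∀ q : ZN N, bc q ^ M ≤ ‖latA q‖ ^ (-(α * M)) := by
    intro q
    calc bc q ^ M ≤ (‖latA q‖ ^ (-α)) ^ M := pow_le_pow_left₀ (hbpos q).le (hbc q).2 M
      _ = (‖latA q‖ ^ (-α)) ^ (M:ℝ) := (Real.rpow_natCast _ M).symm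
      _ = ‖latA q‖ ^ (-α * M) := by rw [← Real.rpow_mul (norm_nonneg _)]
      _ = ‖latA q‖ ^ (-(α * M)) := by rw [neg_mul]
  have hbMsum : Summable (fun q : ZN N => bc q ^ M) :=
    Summable.of_nonneg_of_le (fun q => pow_nonneg (hbpos q).le M) hbM hsum
  have hbMtsum : (∑' q : ZN N, bc q ^ M) ≤ 1 / 2 ^ (M+1) :=
    le_trans (Summable.tsum_le_tsum hbM hbMsum hsum) hbound
  have hbhalf : ∀ q : ZN N, bc q ≤ 1/2 := by
    intro q
    have h1 : bc q ^ M ≤ 1 / 2 ^ (M+1) :=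
      (hbM q).trans ((Summable.le_tsum hsum q fun _ _ => Real.rpow_nonneg (norm_nonneg _) _).trans hbound)
    have h2 : (1:ℝ) / 2 ^ (M+1) ≤ (1/2) ^ M := by
      rw [div_pow, one_pow]
      exact one_div_le_one_div_of_le (by positivity)
        (pow_le_pow_right₀ (by norm_num) (by omega))
    exact le_of_pow_le_pow_left₀ (by omega) (by norm_num) (h1.trans h2)
  intro p z hz
  obtain ⟨hzball, hzne⟩ := hz
  have hzne' : z ≠ latA p := hzne
  set d := ‖z - latA p‖ with hd
  have hd0 : 0 < d := norm_sub_pos_iff.mpr hzne'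
  have hdb : d < bc p := by rw [hd, ← dist_eq_norm]; exact Metric.mem_ball.mp hzball
  have hdhalf : d < 1/2 := lt_of_lt_of_le hdb (hbhalf p)
  set G : ZN N → ℂ → ℂ := fun q w => ((bc q : ℂ)) ^ M * (w - latA q) ^ (-(M:ℤ)) with hG
  set G' : ZN N → ℂ → ℂ :=
    fun q w => -(M:ℂ) * ((bc q : ℂ)) ^ M * ((w - latA q) ^ (M+1))⁻¹ with hG'
  have hlatF : latF N M bc = fun w => ∑' q, G q w := by
    funext w
    unfold latF
    refine tsum_congr fun q => ?_
    simp only [hG]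
    rw [div_pow, zpow_neg, zpow_natCast, div_eq_mul_inv]
  -- separation estimates
  have key : ∀ q : ZN N, ∀ w ∈ Metric.ball z (d/2),
      (if q = p then d/2 else (1/4:ℝ)) ≤ ‖w - latA q‖ := by
    intro q w hw
    rw [Metric.mem_ball, dist_eq_norm] at hw
    by_cases hqp : q = p
    · rw [if_pos hqp, hqp]
      have h1 : ‖z - latA p‖ ≤ ‖z - w‖ + ‖w - latA p‖ :=
        norm_sub_le_norm_sub_add_norm_sub _ _ _
      have h2 : ‖z - w‖ = ‖w - z‖ := norm_sub_rev _ _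
      rw [← hd] at h1
      linarith
    · simp only [if_neg hqp]
      have h0 : 1 ≤ ‖latA p - latA q‖ := one_le_norm_latA_sub (fun h => hqp h.symm)
      have t1 : ‖latA p - latA q‖ ≤ ‖latA p - z‖ + ‖z - latA q‖ :=
        norm_sub_le_norm_sub_add_norm_sub _ _ _
      have t2 : ‖z - latA q‖ ≤ ‖z - w‖ + ‖w - latA q‖ :=
        norm_sub_le_norm_sub_add_norm_sub _ _ _
      have h2 : ‖z - w‖ = ‖w - z‖ := norm_sub_rev _ _
      have h3 : ‖latA p - z‖ = d := by rw [hd, norm_sub_rev]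
      linarith
  have hz2 : ∀ q : ZN N, q ≠ p → (1/2:ℝ) ≤ ‖z - latA q‖ := by
    intro q hqp
    have h0 : 1 ≤ ‖latA p - latA q‖ := one_le_norm_latA_sub (fun h => hqp h.symm)
    have t1 : ‖latA p - latA q‖ ≤ ‖latA p - z‖ + ‖z - latA q‖ :=
      norm_sub_le_norm_sub_add_norm_sub _ _ _
    have h3 : ‖latA p - z‖ = d := by rw [hd, norm_sub_rev]
    linarith
  -- derivative of each term
  have hderiv : ∀ q : ZN N, ∀ w : ℂ, w ≠ latA q → HasDerivAt (G q) (G' q w) w := by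
    intro q w hw
    have h1 : HasDerivAt (fun w : ℂ => w - latA q) 1 w := (hasDerivAt_id w).sub_const _
    have h2 := (hasDerivAt_zpow (-(M:ℤ)) (w - latA q) (Or.inl (sub_ne_zero.mpr hw))).comp w h1
    have h3 := h2.const_mul (((bc q : ℂ)) ^ M)
    have h4 : HasDerivAt (G q)
        (((bc q : ℂ)) ^ M * (((-(M:ℤ) : ℂ)) * (w - latA q) ^ (-(M:ℤ) - 1) * 1)) w := by
      simpa [hG, Function.comp] using h3
    convert h4 using 1
    have hzint : (-(M:ℤ) - 1) = -((M+1 : ℕ) : ℤ) := by push_cast; ring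
    rw [hG', hzint, zpow_neg, zpow_natCast]
    push_cast
    ring
  -- norms
  have hGnorm' : ∀ q : ZN N, ∀ w : ℂ,
      ‖G' q w‖ = (M:ℝ) * bc q ^ M * (‖w - latA q‖ ^ (M+1))⁻¹ := by
    intro q w
    rw [hG']
    simp only [norm_mul, norm_inv, norm_pow, norm_neg, Complex.norm_natCast,
      Complex.norm_real, Real.norm_eq_abs, abs_of_pos (hbpos q)]
  have hGnorm : ∀ q : ZN N, ∀ w : ℂ,
      ‖G q w‖ = bc q ^ M * (‖w - latA q‖ ^ M)⁻¹ := by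
    intro q w
    simp only [hG]
    rw [zpow_neg, zpow_natCast]
    simp only [norm_mul, norm_inv, norm_pow, Complex.norm_real, Real.norm_eq_abs,
      abs_of_pos (hbpos q)]
  have hinv : ∀ (c : ℝ) (x : ℂ) (k : ℕ), 0 < c → c ≤ ‖x‖ →
      (‖x‖ ^ k)⁻¹ ≤ (1/c) ^ k := by
    intro c x k hc hcx
    rw [div_pow, one_pow, one_div]
    exact inv_anti₀ (pow_pos hc k) (pow_le_pow_left₀ hc.le hcx k)
  set u : ZN N → ℝ := fun q => bc q ^ M * ((M:ℝ) * ((2/d)^(M+1) + 4^(M+1))) with hu_def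
  have hu : Summable u := hbMsum.mul_right _
  have hU : ∀ q : ZN N, ∀ w ∈ Metric.ball z (d/2), ‖G' q w‖ ≤ u q := by
    intro q w hw
    rw [hGnorm']
    have hle : (‖w - latA q‖ ^ (M+1))⁻¹ ≤ (2/d)^(M+1) + 4^(M+1) := by
      have hk := key q w hw
      by_cases hqp : q = p
      · rw [if_pos hqp] at hk
        have h1 := hinv (d/2) (w - latA q) (M+1) (half_pos hd0) hk
        rw [one_div_div] at h1
        calc (‖w - latA q‖ ^ (M+1))⁻¹ ≤ (2/d)^(M+1) := h1
          _ ≤ _ := le_add_of_nonneg_right (by positivity)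
      · rw [if_neg hqp] at hk
        have h1 := hinv (1/4) (w - latA q) (M+1) (by norm_num) hk
        have h2 : (1/(1/4:ℝ)) = 4 := by norm_num
        rw [h2] at h1
        calc (‖w - latA q‖ ^ (M+1))⁻¹ ≤ (4:ℝ)^(M+1) := h1
          _ ≤ _ := le_add_of_nonneg_left (by positivity)
    calc (M:ℝ) * bc q ^ M * (‖w - latA q‖ ^ (M+1))⁻¹
        ≤ (M:ℝ) * bc q ^ M * ((2/d)^(M+1) + 4^(M+1)) :=
          mul_le_mul_of_nonneg_left hle (mul_nonneg hMR.le (pow_nonneg (hbpos q).le M))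
      _ = u q := by rw [hu_def]; ring
  have hz_in : z ∈ Metric.ball z (d/2) := Metric.mem_ball_self (half_pos hd0)
  have hwz_ne : ∀ q : ZN N, ∀ w ∈ Metric.ball z (d/2), w ≠ latA q := by
    intro q w hw hcontra
    have hk := key q w hw
    rw [hcontra, sub_self, norm_zero] at hk
    split_ifs at hk <;> linarith
  have hGz : Summable (fun q => G q z) := by
    apply Summable.of_norm
    refine Summable.of_nonneg_of_le (fun q => norm_nonneg _) ?_
      (hbMsum.mul_right ((2/d)^M + 4^M))
    intro q
    rw [hGnorm]
    have hle : (‖z - latA q‖ ^ M)⁻¹ ≤ (2/d)^M + 4^M := by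
      have hk := key q z hz_in
      by_cases hqp : q = p
      · rw [if_pos hqp] at hk
        have h1 := hinv (d/2) (z - latA q) M (half_pos hd0) hk
        rw [one_div_div] at h1
        calc (‖z - latA q‖ ^ M)⁻¹ ≤ (2/d)^M := h1
          _ ≤ _ := le_add_of_nonneg_right (by positivity)
      · rw [if_neg hqp] at hk
        have h1 := hinv (1/4) (z - latA q) M (by norm_num) hk
        have h2 : (1/(1/4:ℝ)) = 4 := by norm_num
        rw [h2] at h1
        calc (‖z - latA q‖ ^ M)⁻¹ ≤ (4:ℝ)^M := h1
          _ ≤ _ := le_add_of_nonneg_left (by positivity)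
    exact mul_le_mul_of_nonneg_left hle (pow_nonneg (hbpos q).le M)
  have hHasDeriv : HasDerivAt (fun w => ∑' q, G q w) (∑' q, G' q z) z :=
    hasDerivAt_tsum_of_isPreconnected hu Metric.isOpen_ball
      (convex_ball z (d/2)).isPreconnected
      (fun q w hw => hderiv q w (hwz_ne q w hw)) hU hz_in hGz hz_in
  have hderivF : deriv (latF N M bc) z = ∑' q, G' q z := by
    rw [hlatF]; exact hHasDeriv.deriv
  have hG'z : Summable (fun q => G' q z) :=
    Summable.of_norm (Summable.of_nonneg_of_le (fun q => norm_nonneg _)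
      (fun q => hU q z hz_in) hu)
  have hsplit : (∑' q, G' q z) = G' p z + ∑' q, if q = p then 0 else G' q z :=
    Summable.tsum_eq_add_tsum_ite hG'z p
  -- tail bound
  have htail_term : ∀ q : ZN N,
      ‖if q = p then 0 else G' q z‖ ≤ bc q ^ M * ((M:ℝ) * 2^(M+1)) := by
    intro q
    by_cases hqp : q = p
    · rw [if_pos hqp, norm_zero]
      exact mul_nonneg (pow_nonneg (hbpos q).le M) (by positivity)
    · rw [if_neg hqp, hGnorm']
      have h2 : (1/2:ℝ) ≤ ‖z - latA q‖ := hz2 q hqp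
      have h3 : (‖z - latA q‖^(M+1))⁻¹ ≤ 2^(M+1) := by
        have h4 := hinv (1/2) (z - latA q) (M+1) (by norm_num) h2
        have h5 : (1/(1/2:ℝ)) = 2 := by norm_num
        rwa [h5] at h4
      calc (M:ℝ) * bc q ^ M * (‖z - latA q‖^(M+1))⁻¹
          ≤ (M:ℝ) * bc q ^ M * 2^(M+1) :=
            mul_le_mul_of_nonneg_left h3 (mul_nonneg hMR.le (pow_nonneg (hbpos q).le M))
        _ = bc q ^ M * ((M:ℝ) * 2^(M+1)) := by ring
  have htail_sum : Summable (fun q : ZN N => ‖if q = p then 0 else G' q z‖) :=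
    Summable.of_nonneg_of_le (fun _ => norm_nonneg _) htail_term (hbMsum.mul_right _)
  have htail : ‖∑' q, if q = p then 0 else G' q z‖ ≤ (M:ℝ) := by
    calc ‖∑' q, if q = p then 0 else G' q z‖
        ≤ ∑' q, ‖if q = p then 0 else G' q z‖ := norm_tsum_le_tsum_norm htail_sum
      _ ≤ ∑' q : ZN N, bc q ^ M * ((M:ℝ) * 2^(M+1)) :=
          Summable.tsum_le_tsum htail_term htail_sum (hbMsum.mul_right _)
      _ = (∑' q : ZN N, bc q ^ M) * ((M:ℝ) * 2^(M+1)) := tsum_mul_right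
      _ ≤ (1/2^(M+1)) * ((M:ℝ) * 2^(M+1)) :=
          mul_le_mul_of_nonneg_right hbMtsum (by positivity)
      _ = (M:ℝ) := by field_simp
  -- main term
  have hmain : (M:ℝ) * (Real.sqrt 2 * N) ^ α ≤ ‖G' p z‖ := by
    rw [hGnorm']
    have h1 : (bc p ^ (M+1))⁻¹ ≤ (d ^ (M+1))⁻¹ :=
      inv_anti₀ (pow_pos hd0 (M+1)) (pow_le_pow_left₀ hd0.le hdb.le (M+1))
    have h3 : (Real.sqrt 2 * N) ^ α ≤ (bc p)⁻¹ := by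
      have h4 : bc p ≤ (‖latA p‖ ^ α)⁻¹ := by
        have h := (hbc p).2; rwa [Real.rpow_neg (norm_nonneg _)] at h
      have h5 : ‖latA p‖ ^ α ≤ (bc p)⁻¹ := by
        have h6 := inv_anti₀ (hbpos p) h4
        rwa [inv_inv] at h6
      exact le_trans (Real.rpow_le_rpow (by positivity) (norm_latA_ge p) hα0.le) h5
    calc (M:ℝ) * (Real.sqrt 2 * N) ^ α ≤ (M:ℝ) * (bc p)⁻¹ :=
          mul_le_mul_of_nonneg_left h3 hMR.le
      _ = (M:ℝ) * bc p ^ M * (bc p ^ (M+1))⁻¹ := by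
          have hbne : bc p ≠ 0 := (hbpos p).ne'
          rw [pow_succ]
          field_simp
      _ ≤ (M:ℝ) * bc p ^ M * (d ^ (M+1))⁻¹ :=
          mul_le_mul_of_nonneg_left h1 (mul_nonneg hMR.le (pow_nonneg (hbpos p).le M))
      _ = (M:ℝ) * bc p ^ M * (‖z - latA p‖ ^ (M+1))⁻¹ := by rw [← hd]
  have hfinal : (M:ℝ) * ((Real.sqrt 2 * N) ^ α - 1) ≤ ‖deriv (latF N M bc) z‖ := by
    rw [hderivF, hsplit]
    set R := ∑' q, if q = p then 0 else G' q z
    have h6 : ‖G' p z‖ ≤ ‖G' p z + R‖ + ‖R‖ := by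
      have h7 := norm_add_le (G' p z + R) (-R)
      simpa using h7
    nlinarith [norm_nonneg R]
  refine ⟨hfinal, ?_⟩
  intro h0
  rw [h0, norm_zero] at hfinal
  nlinarith
end Paper
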